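/- Let R be a PID with fraction field K ≠ R. For any x ∈ M_n(K) there exist c ∈ M_n(R) and d ∈ M_n(R) ∩ GL_n(K) such that x = d^{-1}c and the block matrix [c d] ∈ M_{n×2n}(R) is primitive (its elementary divisors are all R); the ideal ν_0(x) := det(d)·R is independent of the choice of such (c,d). -/

import Mathlib

/-- A pair of square matrices `(c, d)` over `R` is *primitive* if the `n×2n`
block matrix `[c d]` is primitive, i.e. the ideal generated by its `n×n` minors
is all of `R` (equivalently, all its elementary divisors are `R`). -/
def IsPrimitivePair {R : Type*} [CommRing R] {n : ℕ}
    (c d : Matrix (Fin n) (Fin n) R) : Prop :=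
  Ideal.span {t : R | ∃ g : Fin n → (Fin n ⊕ Fin n), Function.Injective g ∧
    t = ((Matrix.fromCols c d).submatrix id g).det} = ⊤

open Matrix in
lemma aux_mul_one_submatrix {R : Type*} [CommRing R] {n : ℕ}
    (A : Matrix (Fin n) (Fin n ⊕ Fin n) R) (g : Fin n → Fin n ⊕ Fin n) :
    A * (1 : Matrix (Fin n ⊕ Fin n) (Fin n ⊕ Fin n) R).submatrix id g
      = A.submatrix id g := by
  ext i j
  simp [Matrix.mul_apply, Matrix.one_apply, Matrix.submatrix_apply]

open Matrix in
lemma aux_exists_right_inverse {R : Type*} [CommRing R] {n : ℕ}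
    {c d : Matrix (Fin n) (Fin n) R} (h : IsPrimitivePair c d) :
    ∃ B : Matrix (Fin n ⊕ Fin n) (Fin n) R, Matrix.fromCols c d * B = 1 := by
  classical
  set s : Set R := {t : R | ∃ g : Fin n → (Fin n ⊕ Fin n), Function.Injective g ∧
    t = ((Matrix.fromCols c d).submatrix id g).det} with hs
  have h1 : (1 : R) ∈ Ideal.span s := by rw [h]; trivial
  obtain ⟨N, f, g, hsum⟩ := Submodule.mem_span_set'.mp h1
  choose gf hginj hgdet using fun i => (g i).2
  refine ⟨∑ i : Fin N, f i •
    ((1 : Matrix (Fin n ⊕ Fin n) (Fin n ⊕ Fin n) R).submatrix id (gf i) *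
      adjugate ((Matrix.fromCols c d).submatrix id (gf i))), ?_⟩
  rw [Matrix.mul_sum]
  have : ∀ i : Fin N, Matrix.fromCols c d *
      (f i • ((1 : Matrix (Fin n ⊕ Fin n) (Fin n ⊕ Fin n) R).submatrix id (gf i) *
        adjugate ((Matrix.fromCols c d).submatrix id (gf i))))
      = (f i * (g i : R)) • (1 : Matrix (Fin n) (Fin n) R) := by
    intro i
    rw [Matrix.mul_smul, ← Matrix.mul_assoc, aux_mul_one_submatrix, Matrix.mul_adjugate,
      ← hgdet i, smul_smul]
  simp_rw [this, ← Finset.sum_smul]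
  have h2 : ∑ i : Fin N, f i * (g i : R) = 1 := by simpa [smul_eq_mul] using hsum
  rw [h2, one_smul]

open Matrix

lemma aux_field_minor {k : Type*} [Field k] {n : ℕ}
    (A : Matrix (Fin n) (Fin n ⊕ Fin n) k)
    (h : Function.Surjective A.mulVec) :
    ∃ g : Fin n → Fin n ⊕ Fin n, Function.Injective g ∧
      (A.submatrix id g).det ≠ 0 := by
  classical
  have hsp : Submodule.span k (Set.range Aᵀ) = ⊤ := by
    rw [show Set.range Aᵀ = Set.range A.col from rfl, ← Matrix.range_mulVecLin]
    exact LinearMap.range_eq_top.mpr h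
  obtain ⟨b, hbsub, hbsp, hli⟩ := exists_linearIndependent k (Set.range Aᵀ)
  rw [hsp] at hbsp
  haveI : Fintype b := ((Set.finite_range Aᵀ).subset hbsub).fintype
  let β : Module.Basis b k (Fin n → k) := Module.Basis.mk hli (by rw [Subtype.range_coe, hbsp])
  have hcard : Fintype.card b = n := by
    have h1 := Module.finrank_eq_card_basis β
    rw [Module.finrank_fin_fun] at h1
    exact h1.symm
  let e : Fin n ≃ b := (Fintype.equivFinOfCardEq hcard).symm
  have hmem : ∀ v : b, (v : Fin n → k) ∈ Set.range Aᵀ := fun v => hbsub v.2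
  choose idx hidx using hmem
  refine ⟨fun i => idx (e i), ?_, ?_⟩
  · intro i j hij
    have hij' : idx (e i) = idx (e j) := hij
    have : (e i : Fin n → k) = (e j : Fin n → k) := by
      rw [← hidx (e i), ← hidx (e j), hij']
    exact e.injective (Subtype.coe_injective this)
  · have hcols : (fun i => (A.submatrix id (fun i => idx (e i)))ᵀ i)
        = Subtype.val ∘ e := by
      funext i
      ext j
      simp only [Matrix.transpose_apply, Matrix.submatrix_apply, id_eq, Function.comp_apply]
      have := congrFun (hidx (e i)) j
      simpa using this
    have hli2 : LinearIndependent k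
        (fun i => (A.submatrix id (fun i => idx (e i)))ᵀ i) := by
      rw [hcols]
      exact hli.comp e e.injective
    have := Matrix.linearIndependent_cols_iff_isUnit.mp hli2
    have hdet := (Matrix.isUnit_iff_isUnit_det _).mp this
    exact hdet.ne_zero

lemma aux_primitive_of_surjective {R : Type*} [CommRing R] [Nontrivial R] {n : ℕ}
    (c d : Matrix (Fin n) (Fin n) R)
    (h : Function.Surjective (Matrix.fromCols c d).mulVec) :
    IsPrimitivePair c d := by
  classical
  set A := Matrix.fromCols c d with hA
  by_contra hne
  obtain ⟨m, hm, hle⟩ := Ideal.exists_le_maximal _ hne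
  haveI := hm
  letI : Field (R ⧸ m) := Ideal.Quotient.field m
  set π := Ideal.Quotient.mk m with hπ
  have hsurj : Function.Surjective (A.map π).mulVec := by
    intro w
    choose w' hw' using fun i => Ideal.Quotient.mk_surjective (w i)
    obtain ⟨v, hv⟩ := h w'
    refine ⟨π ∘ v, ?_⟩
    funext i
    rw [← RingHom.map_mulVec, hv, hw']
  obtain ⟨g, hg, hdet⟩ := aux_field_minor (A.map π) hsurj
  have hmem : (A.submatrix id g).det ∈ m := hle (Ideal.subset_span ⟨g, hg, rfl⟩)
  apply hdet
  rw [Matrix.submatrix_map]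
  have : ((A.submatrix id g).map π).det = π ((A.submatrix id g).det) :=
    (RingHom.map_det π _).symm
  rw [this]
  exact Ideal.Quotient.eq_zero_iff_mem.mpr hmem

open Matrix

lemma aux_fromColumns_map {R S : Type*} [CommRing R] [CommRing S] {n : ℕ}
    (c d : Matrix (Fin n) (Fin n) R) (f : R → S) :
    (Matrix.fromCols c d).map f = Matrix.fromCols (c.map f) (d.map f) := by
  ext i j
  cases j <;> simp [Matrix.fromCols]

lemma aux_transfer {R : Type*} [CommRing R] {K : Type*} [Field K] [Algebra R K]
    [IsFractionRing R K] {n : ℕ} (x : Matrix (Fin n) (Fin n) K)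
    (c d c' d' : Matrix (Fin n) (Fin n) R)
    (hd : d.det ≠ 0)
    (hx : d.map (algebraMap R K) * x = c.map (algebraMap R K))
    (hx' : d'.map (algebraMap R K) * x = c'.map (algebraMap R K))
    (B : Matrix (Fin n ⊕ Fin n) (Fin n) R)
    (hB : Matrix.fromCols c d * B = 1) :
    (Matrix.fromCols c' d' * B) * d = d' := by
  classical
  set φ := algebraMap R K with hφ
  have hφinj : Function.Injective φ := IsFractionRing.injective R K
  have hdK : (d.map φ).det ≠ 0 := by
    have hdet_eq : (d.map φ).det = φ d.det := (RingHom.map_det φ d).symm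
    rw [hdet_eq]
    exact fun hc => hd (hφinj (by simpa using hc))
  have hdKu : IsUnit (d.map φ).det := isUnit_iff_ne_zero.mpr hdK
  set M := d'.map φ * (d.map φ)⁻¹ with hM
  have hMd : M * d.map φ = d'.map φ := by
    rw [hM, Matrix.mul_assoc, Matrix.nonsing_inv_mul _ hdKu, Matrix.mul_one]
  have hMc : M * c.map φ = c'.map φ := by
    rw [← hx, ← Matrix.mul_assoc, hMd, hx']
  have h1 : (Matrix.fromCols c' d').map φ = M * (Matrix.fromCols c d).map φ := by
    rw [aux_fromColumns_map, aux_fromColumns_map, Matrix.mul_fromCols, hMc, hMd]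
  have h2 : ((Matrix.fromCols c' d' * B) * d).map φ = d'.map φ := by
    have e1 : ((Matrix.fromCols c' d' * B) * d).map φ
        = (Matrix.fromCols c' d').map φ * (B.map φ * d.map φ) := by
      rw [Matrix.map_mul, Matrix.map_mul, Matrix.mul_assoc]
    have e2 : (Matrix.fromCols c d).map φ * (B.map φ * d.map φ)
        = ((Matrix.fromCols c d * B) * d).map φ := by
      rw [Matrix.map_mul, Matrix.map_mul, Matrix.mul_assoc]
    rw [e1, h1, Matrix.mul_assoc M, e2, hB, Matrix.one_mul]
    exact hMd
  exact Matrix.map_injective hφinj h2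

lemma aux_unique {R : Type*} [CommRing R] [IsDomain R] {K : Type*} [Field K] [Algebra R K]
    [IsFractionRing R K] {n : ℕ} (x : Matrix (Fin n) (Fin n) K)
    (c d c' d' : Matrix (Fin n) (Fin n) R)
    (hd : d.det ≠ 0) (hd' : d'.det ≠ 0)
    (hx : d.map (algebraMap R K) * x = c.map (algebraMap R K))
    (hx' : d'.map (algebraMap R K) * x = c'.map (algebraMap R K))
    (hp : IsPrimitivePair c d) (hp' : IsPrimitivePair c' d') :
    Ideal.span {d.det} = Ideal.span ({d'.det} : Set R) := by
  obtain ⟨B, hB⟩ := aux_exists_right_inverse hp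
  obtain ⟨B', hB'⟩ := aux_exists_right_inverse hp'
  have h1 := aux_transfer x c d c' d' hd hx hx' B hB
  have h2 := aux_transfer x c' d' c d hd' hx' hx B' hB'
  set u := Matrix.fromCols c' d' * B with hu
  set u' := Matrix.fromCols c d * B' with hu'
  have hdet1 : u.det * d.det = d'.det := by rw [← Matrix.det_mul, h1]
  have hdet2 : u'.det * d'.det = d.det := by rw [← Matrix.det_mul, h2]
  have hcancel : u.det * u'.det = 1 := by
    have : (u.det * u'.det) * d'.det = 1 * d'.det := by
      rw [one_mul, mul_assoc, hdet2, hdet1]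
    exact mul_right_cancel₀ hd' this
  have hU : IsUnit u.det := IsUnit.of_mul_eq_one _ hcancel
  obtain ⟨v, hv⟩ := hU
  refine Ideal.span_singleton_eq_span_singleton.mpr ⟨v, ?_⟩
  rw [hv, mul_comm, hdet1]

open Matrix

lemma aux_exists {R : Type*} [CommRing R] [IsDomain R] [IsPrincipalIdealRing R]
    {K : Type*} [Field K] [Algebra R K] [IsFractionRing R K] {n : ℕ}
    (x : Matrix (Fin n) (Fin n) K) :
    ∃ (c d : Matrix (Fin n) (Fin n) R), d.det ≠ 0 ∧
      d.map (algebraMap R K) * x = c.map (algebraMap R K) ∧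
      IsPrimitivePair c d := by
  classical
  set φ := algebraMap R K with hφ
  have hφinj : Function.Injective φ := IsFractionRing.injective R K
  -- common denominator
  obtain ⟨r, hr⟩ := IsLocalization.exist_integer_multiples_of_finite
    (nonZeroDivisors R) (fun p : Fin n × Fin n => x p.1 p.2)
  have hr' : ∀ i j, ∃ a : R, φ a = (r : R) • x i j := fun i j => hr (i, j)
  choose c₀f hc₀ using hr'
  set c₀ : Matrix (Fin n) (Fin n) R := Matrix.of c₀f with hc₀def
  set d₀ : Matrix (Fin n) (Fin n) R := Matrix.diagonal (fun _ => (r : R)) with hd₀def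
  have hrne : (r : R) ≠ 0 := nonZeroDivisors.ne_zero r.2
  set A₀ : Matrix (Fin n) (Fin n ⊕ Fin n) R := Matrix.fromCols c₀ d₀ with hA₀
  set N : Submodule R (Fin n → R) := LinearMap.range A₀.mulVecLin with hN
  obtain ⟨m, bN⟩ := Submodule.basisOfPid (Pi.basisFun R (Fin n)) N
  -- m = n
  have hrank : Module.rank R N = m := by
    rw [rank_eq_card_basis bN]; simp
  have hup : (m : Cardinal) ≤ n := by
    rw [← hrank]
    exact le_trans (Submodule.rank_le N) (by rw [rank_fin_fun])
  have hdown : (n : Cardinal) ≤ m := by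
    have hmem : ∀ v : Fin n → R, d₀.mulVec v ∈ N := by
      intro v
      refine ⟨Sum.elim 0 v, ?_⟩
      rw [Matrix.mulVecLin_apply, hA₀, Matrix.fromCols_mulVec_sumElim,
        Matrix.mulVec_zero, zero_add]
    have hd₀mv : ∀ v : Fin n → R, d₀.mulVec v = fun i => (r : R) * v i := by
      intro v; funext i; rw [hd₀def, Matrix.mulVec_diagonal]
    let L : (Fin n → R) →ₗ[R] N :=
      LinearMap.codRestrict N (Matrix.mulVecLin d₀) (fun v => hmem v)
    have hLinj : Function.Injective L := by
      intro a b hab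
      have h2 : d₀.mulVec a = d₀.mulVec b := congrArg Subtype.val hab
      funext i
      have := congrFun h2 i
      rw [hd₀mv a, hd₀mv b] at this
      exact mul_left_cancel₀ hrne this
    have := LinearMap.rank_le_of_injective L hLinj
    rwa [hrank, rank_fin_fun] at this
  have hm : m = n := by exact_mod_cast le_antisymm hup hdown
  let β : Module.Basis (Fin n) R N := bN.reindex (finCongr hm)
  -- columns of A₀ as elements of N
  have hcolmem : ∀ j : Fin n ⊕ Fin n, A₀ᵀ j ∈ N := by
    intro j
    exact ⟨Pi.single j 1, by rw [Matrix.mulVecLin_apply, Matrix.mulVec_single_one]; rfl⟩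
  set colN : (Fin n ⊕ Fin n) → N := fun j => ⟨A₀ᵀ j, hcolmem j⟩ with hcolN
  set w : Matrix (Fin n) (Fin n) R := Matrix.of (fun i k => (β k : Fin n → R) i) with hw
  set A : Matrix (Fin n) (Fin n ⊕ Fin n) R :=
    Matrix.of (fun k j => β.repr (colN j) k) with hAdef
  set c : Matrix (Fin n) (Fin n) R := Matrix.of (fun i j => A i (Sum.inl j)) with hcdef
  set d : Matrix (Fin n) (Fin n) R := Matrix.of (fun i j => A i (Sum.inr j)) with hddef
  have hfc : Matrix.fromCols c d = A := by
    ext i j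
    cases j <;> rfl
  have hwA : w * A = A₀ := by
    ext i j
    rw [Matrix.mul_apply]
    have hrepr := β.sum_repr (colN j)
    have h2 := congrArg (fun y : N => (y : Fin n → R) i) hrepr
    simp only [Submodule.coe_sum, Submodule.coe_smul, Finset.sum_apply, Pi.smul_apply,
      smul_eq_mul] at h2
    calc ∑ k, w i k * A k j
        = ∑ k, (β.repr (colN j)) k * (β k : Fin n → R) i := by
          apply Finset.sum_congr rfl
          intro k _
          rw [mul_comm]
          rfl
      _ = A₀ i j := h2
  have hwc : w * c = c₀ := by
    ext i j
    calc (w * c) i j = (w * A) i (Sum.inl j) := by rw [← hfc]; rfl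
      _ = A₀ i (Sum.inl j) := by rw [hwA]
      _ = c₀ i j := rfl
  have hwd : w * d = d₀ := by
    ext i j
    calc (w * d) i j = (w * A) i (Sum.inr j) := by rw [← hfc]; rfl
      _ = A₀ i (Sum.inr j) := by rw [hwA]
      _ = d₀ i j := rfl
  have hdetwd : w.det * d.det = (r : R) ^ n := by
    rw [← Matrix.det_mul, hwd, hd₀def, Matrix.det_diagonal, Finset.prod_const,
      Finset.card_univ, Fintype.card_fin]
  have hdetprod : w.det * d.det ≠ 0 := by
    rw [hdetwd]; exact pow_ne_zero n hrne
  have hdw : w.det ≠ 0 := left_ne_zero_of_mul hdetprod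
  have hdd : d.det ≠ 0 := right_ne_zero_of_mul hdetprod
  -- the equation over K
  have hd₀x : d₀.map φ * x = c₀.map φ := by
    ext i j
    rw [hd₀def, Matrix.diagonal_map (map_zero φ), Matrix.diagonal_mul]
    show φ (r : R) * x i j = φ (c₀f i j)
    rw [hc₀ i j, Algebra.smul_def, hφ]
  have hwKdet : (w.map φ).det ≠ 0 := by
    have hdet_eq : (w.map φ).det = φ w.det := (RingHom.map_det φ w).symm
    rw [hdet_eq]
    exact fun hcon => hdw (hφinj (by simpa using hcon))
  have hwKu : IsUnit (w.map φ) :=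
    (Matrix.isUnit_iff_isUnit_det _).mpr (isUnit_iff_ne_zero.mpr hwKdet)
  have hxeq : d.map φ * x = c.map φ := by
    have hkey : w.map φ * (d.map φ * x) = w.map φ * c.map φ := by
      rw [← Matrix.mul_assoc, ← Matrix.map_mul, hwd, ← Matrix.map_mul, hwc, hd₀x]
    exact hwKu.mul_left_cancel hkey
  -- surjectivity
  have hsurj : Function.Surjective (Matrix.fromCols c d).mulVec := by
    rw [hfc]
    intro v
    set z : N := ∑ k : Fin n, v k • β k with hz
    obtain ⟨u, hu⟩ := z.2
    refine ⟨u, ?_⟩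
    have hwv : w.mulVec v = (z : Fin n → R) := by
      funext i
      rw [hz]
      simp only [Submodule.coe_sum, Submodule.coe_smul, Finset.sum_apply, Pi.smul_apply,
        smul_eq_mul]
      rw [Matrix.mulVec, dotProduct]
      apply Finset.sum_congr rfl
      intro k _
      rw [mul_comm]
      rfl
    have hwAu : w.mulVec (A.mulVec u) = (z : Fin n → R) := by
      rw [Matrix.mulVec_mulVec, hwA]
      exact hu
    have hcan : A.mulVec u = v := by
      have hab : w.mulVec (A.mulVec u) = w.mulVec v := by rw [hwAu, hwv]
      have h2 := congrArg (fun t => w.adjugate.mulVec t) hab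
      simp only [Matrix.mulVec_mulVec] at h2
      rw [← Matrix.mul_assoc, Matrix.adjugate_mul, Matrix.smul_mul, Matrix.one_mul] at h2
      simp only [Matrix.smul_mulVec, Matrix.one_mulVec] at h2
      funext i
      have hi := congrFun h2 i
      simp only [Pi.smul_apply, smul_eq_mul] at hi
      exact mul_left_cancel₀ hdw hi
    exact hcan
  exact ⟨c, d, hdd, hxeq, aux_primitive_of_surjective c d hsurj⟩

/-- Denominator ideal over a PID: for any `x ∈ M_n(K)` with `K` the fraction
field of a PID `R`, there exist `c ∈ M_n(R)` and `d ∈ M_n(R) ∩ GL_n(K)` with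
`x = d^{-1}·c` and `[c d]` primitive; and the ideal `ν₀(x) := det(d)·R` is
independent of the choice of such a pair `(c, d)`. -/
theorem denominator_ideal_well_defined
    (R : Type*) [CommRing R] [IsDomain R] [IsPrincipalIdealRing R]
    (K : Type*) [Field K] [Algebra R K] [IsFractionRing R K]
    (n : ℕ) (x : Matrix (Fin n) (Fin n) K) :
    ∃ (c d : Matrix (Fin n) (Fin n) R),
      d.det ≠ 0 ∧ d.map (algebraMap R K) * x = c.map (algebraMap R K) ∧
      IsPrimitivePair c d ∧
      ∀ (c' d' : Matrix (Fin n) (Fin n) R), d'.det ≠ 0 →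
        d'.map (algebraMap R K) * x = c'.map (algebraMap R K) →
        IsPrimitivePair c' d' →
        Ideal.span {d.det} = Ideal.span ({d'.det} : Set R) := by
  obtain ⟨c, d, hdd, hxeq, hp⟩ := aux_exists (R := R) x
  exact ⟨c, d, hdd, hxeq, hp, fun c' d' hd' hx' hp' =>
    aux_unique x c d c' d' hdd hd' hxeq hx' hp hp'⟩
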